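/- If S is a uniformly random binary sequence of length n and s is any fixed binary sequence of length m ≤ n, then the probability that s is a subsequence of S equals 2^{-n} times the sum over l from m to n of binomial(n, l); in particular, if m ≤ ⌊n/2⌋ this probability is greater than 1/2. -/

import Mathlib

open Finset



private lemma sublist_cons_ne {a b : Bool} {t L : List Bool} (hab : a ≠ b) :
    (a :: t).Sublist (b :: L) ↔ (a :: t).Sublist L := by
  constructor
  · intro h
    cases h with
    | cons _ h => exact h
    | cons_cons _ h => exact absurd rfl hab
  · exact fun h => h.cons b

private lemma card_cons (n : ℕ) (b : Bool) (Q : (Fin (n + 1) → Bool) → Prop)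
    [DecidablePred Q] :
    (univ.filter fun S : Fin (n + 1) → Bool => S 0 = b ∧ Q S).card
      = (univ.filter fun T : Fin n → Bool => Q (Fin.cons b T)).card := by
  refine Finset.card_bij' (fun S _ => Fin.tail S) (fun T _ => Fin.cons b T) ?_ ?_ ?_ ?_
  · intro S hS
    simp only [mem_filter, mem_univ, true_and] at hS ⊢
    rw [show Fin.cons b (Fin.tail S) = S by rw [← hS.1]; exact Fin.cons_self_tail S]
    exact hS.2
  · intro T hT
    simp only [mem_filter, mem_univ, true_and] at hT ⊢
    refine ⟨by simp, hT⟩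
  · intro S hS
    simp only [mem_filter, mem_univ, true_and] at hS
    have h := Fin.cons_self_tail (α := fun _ => Bool) S
    rw [hS.1] at h
    exact h
  · intro T hT
    simp

private lemma hofn (n : ℕ) (b : Bool) (T : Fin n → Bool) :
    List.ofFn (Fin.cons b T) = b :: List.ofFn T := by
  rw [List.ofFn_succ]
  simp

private lemma key_sum (n m : ℕ) : ∑ l ∈ Finset.Icc m n, n.choose l
    + ∑ l ∈ Finset.Icc (m + 1) n, n.choose l
    = ∑ l ∈ Finset.Icc (m + 1) (n + 1), (n + 1).choose l := by
  rw [← Finset.Ico_add_one_right_eq_Icc, ← Finset.Ico_add_one_right_eq_Icc, ← Finset.Ico_add_one_right_eq_Icc]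
  rw [Finset.sum_Ico_eq_sum_range, Finset.sum_Ico_eq_sum_range,
    Finset.sum_Ico_eq_sum_range]
  rcases le_or_gt m n with hmn | hmn
  · have h1 : n + 1 - m = (n - m) + 1 := by omega
    have h2 : n + 1 + 1 - (m + 1) = (n - m) + 1 := by omega
    have h3 : n + 1 - (m + 1) = n - m := by omega
    rw [h1, h2, h3, Finset.sum_range_succ, Finset.sum_range_succ]
    have hp : ∀ i, (n + 1).choose (m + 1 + i) = n.choose (m + i) + n.choose (m + i + 1) := by
      intro i
      rw [show m + 1 + i = (m + i) + 1 by ring, Nat.choose_succ_succ']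
    simp only [hp]
    rw [Finset.sum_add_distrib]
    have hre : ∀ i, m + i + 1 = m + 1 + i := fun i => by ring
    simp only [hre]
    have hA : n.choose (m + (n - m)) = 1 := by
      rw [show m + (n - m) = n by omega, Nat.choose_self]
    have hB : n.choose (m + 1 + (n - m)) = 0 := by
      apply Nat.choose_eq_zero_of_lt
      omega
    have hC : (n + 1).choose (m + 1 + (n - m)) = 1 := by
      rw [show m + 1 + (n - m) = n + 1 by omega, Nat.choose_self]
    rw [hA, hB]
    omega
  · have h1 : n + 1 - m = 0 := by omega
    have h2 : n + 1 + 1 - (m + 1) = 0 := by omega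
    have h3 : n + 1 - (m + 1) = 0 := by omega
    rw [h1, h2, h3]
    simp

private lemma count_sub : ∀ (n : ℕ) (s : List Bool),
    (univ.filter fun S : Fin n → Bool => s.Sublist (List.ofFn S)).card
      = ∑ l ∈ Finset.Icc s.length n, n.choose l := by
  intro n
  induction n with
  | zero =>
    intro s
    cases s with
    | nil => simp
    | cons a t =>
      rw [Finset.filter_false_of_mem, Finset.card_empty]
      · rw [eq_comm, Finset.sum_eq_zero_iff]
        intro l hl
        simp at hl
      · intro S _
        simp
  | succ n ih =>
    intro s
    cases s with
    | nil =>
      rw [Finset.filter_true_of_mem (fun S _ => List.nil_sublist _)]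
      rw [Finset.card_univ, Fintype.card_fun]
      simp only [List.length_nil]
      rw [show Finset.Icc 0 (n + 1) = Finset.range (n + 2) by
        rw [Finset.range_eq_Ico, ← Finset.Ico_add_one_right_eq_Icc]; rfl]
      rw [Nat.sum_range_choose]
      simp
    | cons a t =>
      have hsplit :
          (univ.filter fun S : Fin (n+1) → Bool => (a :: t).Sublist (List.ofFn S))
            = (univ.filter fun S : Fin (n+1) → Bool =>
                S 0 = a ∧ (a :: t).Sublist (List.ofFn S))
              ∪ (univ.filter fun S : Fin (n+1) → Bool =>
                S 0 = !a ∧ (a :: t).Sublist (List.ofFn S)) := by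
        rw [← Finset.filter_or]
        apply Finset.filter_congr
        intro S _
        cases hb : S 0 <;> cases a <;> simp [hb]
      have hdisj : Disjoint
          (univ.filter fun S : Fin (n+1) → Bool =>
                S 0 = a ∧ (a :: t).Sublist (List.ofFn S))
          (univ.filter fun S : Fin (n+1) → Bool =>
                S 0 = !a ∧ (a :: t).Sublist (List.ofFn S)) := by
        rw [Finset.disjoint_left]
        intro S h1 h2
        simp only [mem_filter, mem_univ, true_and] at h1 h2
        rw [h1.1] at h2
        cases a <;> simp at h2
      rw [hsplit, Finset.card_union_of_disjoint hdisj]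
      rw [card_cons n a, card_cons n (!a)]
      have e1 : (univ.filter fun T : Fin n → Bool =>
          (a :: t).Sublist (List.ofFn (Fin.cons a T)))
            = (univ.filter fun T : Fin n → Bool => t.Sublist (List.ofFn T)) := by
        apply Finset.filter_congr
        intro T _
        rw [hofn]
        exact List.cons_sublist_cons
      have e2 : (univ.filter fun T : Fin n → Bool =>
          (a :: t).Sublist (List.ofFn (Fin.cons (!a) T)))
            = (univ.filter fun T : Fin n → Bool => (a :: t).Sublist (List.ofFn T)) := by
        apply Finset.filter_congr
        intro T _
        rw [hofn]
        exact sublist_cons_ne (by cases a <;> simp)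
      rw [e1, e2, ih t, ih (a :: t)]
      simp only [List.length_cons]
      exact key_sum n t.length

private lemma half_lt (n m : ℕ) (hm : m ≤ n / 2) :
    2 ^ n < 2 * ∑ l ∈ Finset.Icc m n, n.choose l := by
  have hmn : m ≤ n := le_trans hm (Nat.div_le_self n 2)
  have h2m : 2 * m ≤ n := by omega
  set A := ∑ l ∈ Finset.Icc m n, n.choose l with hA
  set B := ∑ l ∈ Finset.range m, n.choose l with hB
  have hAB : B + A = 2 ^ n := by
    rw [hA, hB, Finset.range_eq_Ico, ← Finset.Ico_add_one_right_eq_Icc,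
      Finset.sum_Ico_consecutive _ (Nat.zero_le m) (by omega),
      ← Finset.range_eq_Ico]
    exact Nat.sum_range_choose n
  have hBsym : B = ∑ l ∈ Finset.Icc (n - m + 1) n, n.choose l := by
    apply Finset.sum_nbij' (fun l => n - l) (fun l => n - l)
    · intro a ha
      simp only [Finset.mem_range] at ha
      simp only [Finset.mem_Icc]
      omega
    · intro a ha
      simp only [Finset.mem_Icc] at ha
      simp only [Finset.mem_range]
      omega
    · intro a ha
      simp only [Finset.mem_range] at ha
      omega
    · intro a ha
      simp only [Finset.mem_Icc] at ha
      omega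
    · intro a ha
      simp only [Finset.mem_range] at ha
      exact (Nat.choose_symm (by omega)).symm
  have hsub : insert m (Finset.Icc (n - m + 1) n) ⊆ Finset.Icc m n := by
    intro l hl
    simp only [Finset.mem_insert, Finset.mem_Icc] at hl ⊢
    omega
  have hnotmem : m ∉ Finset.Icc (n - m + 1) n := by
    simp only [Finset.mem_Icc]
    omega
  have hle : n.choose m + B ≤ A := by
    rw [hBsym, ← Finset.sum_insert hnotmem]
    exact Finset.sum_le_sum_of_subset hsub
  have hpos : 0 < n.choose m := Nat.choose_pos hmn
  omega

/-- If `S` is a uniformly random binary sequence of length `n` and `s` a fixed binary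
sequence of length `m ≤ n`, then `Pr[s is a subsequence of S] = 2⁻ⁿ ∑_{l=m}^{n} C(n,l)`;
in particular if `m ≤ ⌊n/2⌋` this probability is greater than `1/2`. -/
theorem stmt5 (n : ℕ) (s : List Bool) (h : s.length ≤ n) :
    ((univ.filter fun S : Fin n → Bool => s.Sublist (List.ofFn S)).card : ℝ) / 2 ^ n
        = (1 / (2 : ℝ)) ^ n * ∑ l ∈ Finset.Icc s.length n, (n.choose l : ℝ)
    ∧ (s.length ≤ n / 2 →
        ((univ.filter fun S : Fin n → Bool => s.Sublist (List.ofFn S)).card : ℝ) / 2 ^ n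
          > 1 / 2) := by
  rw [count_sub n s]
  constructor
  · push_cast
    rw [div_pow, one_pow, div_eq_mul_inv, div_eq_mul_inv]
    ring
  · intro h2
    have key := half_lt n s.length h2
    rw [gt_iff_lt, lt_div_iff₀ (by positivity)]
    have : (2 : ℝ) ^ n < 2 * (∑ l ∈ Finset.Icc s.length n, n.choose l : ℕ) := by
      exact_mod_cast key
    push_cast at this ⊢
    linarith
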